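/- Separation of operator norm and cb-norm: for T = (ν/(ν+1)) S + (1/(ν+1)) Θ on B(ℂ^ν), with S the completely depolarizing channel and Θ the transpose map, one has ‖T − S‖ ≤ 2/(ν+1) while ‖T − S‖_cb ≥ (ν−1)/(ν+1). In particular ‖T − S‖ → 0 but ‖T − S‖_cb ≥ 1 − 2/(ν+1) stays bounded away from 0 as ν → ∞. -/

import Mathlib

open scoped Kronecker Matrix.Norms.L2Operator ComplexOrder
open Matrix Classical

namespace QI

/-- Total matrix square root: the positive square root for positive semidefinite
matrices, junk value `0` otherwise. -/
noncomputable def msqrt {n : Type*} [Fintype n] [DecidableEq n] (A : Matrix n n ℂ) :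
    Matrix n n ℂ :=
  if h : A.PosSemidef then
    (h.1.eigenvectorUnitary : Matrix n n ℂ) * diagonal (((↑) : ℝ → ℂ) ∘ Real.sqrt ∘ h.1.eigenvalues) *
      (star h.1.eigenvectorUnitary : Matrix n n ℂ)
  else 0

/-- Trace norm `‖X‖₁ = tr √(Xᴴ X)`. -/
noncomputable def traceNorm {n : Type*} [Fintype n] [DecidableEq n] (X : Matrix n n ℂ) : ℝ :=
  (msqrt (Xᴴ * X)).trace.re

/-- Fidelity `f(ρ,σ) = tr √(√ρ σ √ρ)`. -/
noncomputable def fid {n : Type*} [Fintype n] [DecidableEq n] (ρ σ : Matrix n n ℂ) : ℝ :=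
  (msqrt (msqrt ρ * σ * msqrt ρ)).trace.re

/-- Amplification `id_k ⊗ Φ` of a map between matrix algebras. -/
noncomputable def amp {nB nA : ℕ} (k : ℕ)
    (Φ : Matrix (Fin nB) (Fin nB) ℂ →ₗ[ℂ] Matrix (Fin nA) (Fin nA) ℂ) :
    Matrix (Fin k × Fin nB) (Fin k × Fin nB) ℂ →ₗ[ℂ]
      Matrix (Fin k × Fin nA) (Fin k × Fin nA) ℂ where
  toFun X := Matrix.of fun p q => Φ (Matrix.of fun a b => X (p.1, a) (q.1, b)) p.2 q.2
  map_add' X Y := by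
    ext p q
    have h : (Matrix.of fun a b => (X + Y) (p.1, a) (q.1, b))
        = (Matrix.of fun a b => X (p.1, a) (q.1, b))
          + Matrix.of fun a b => Y (p.1, a) (q.1, b) := by
      ext a b; simp
    show Φ (Matrix.of fun a b => (X + Y) (p.1, a) (q.1, b)) p.2 q.2
      = Φ (Matrix.of fun a b => X (p.1, a) (q.1, b)) p.2 q.2
        + Φ (Matrix.of fun a b => Y (p.1, a) (q.1, b)) p.2 q.2
    rw [h, map_add]; rfl
  map_smul' c X := by
    ext p q
    have h : (Matrix.of fun a b => (c • X) (p.1, a) (q.1, b))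
        = c • Matrix.of fun a b => X (p.1, a) (q.1, b) := by
      ext a b; simp
    show Φ (Matrix.of fun a b => (c • X) (p.1, a) (q.1, b)) p.2 q.2
      = (c • Φ (Matrix.of fun a b => X (p.1, a) (q.1, b))) p.2 q.2
    rw [h, _root_.map_smul]

/-- Operator norm of a linear map between matrix spaces, each equipped with the
ℓ²-operator norm. -/
noncomputable def opNorm {m n : Type*} [Fintype m] [Fintype n] [DecidableEq m] [DecidableEq n]
    (Φ : Matrix m m ℂ →ₗ[ℂ] Matrix n n ℂ) : ℝ :=
  ‖LinearMap.toContinuousLinearMap Φ‖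

/-- The norm of complete boundedness `‖Φ‖_cb = sup_k ‖id_k ⊗ Φ‖`. -/
noncomputable def cbNorm {nB nA : ℕ}
    (Φ : Matrix (Fin nB) (Fin nB) ℂ →ₗ[ℂ] Matrix (Fin nA) (Fin nA) ℂ) : ℝ :=
  ⨆ k : ℕ, opNorm (amp k Φ)

/-- Complete positivity. -/
def IsCP {nB nA : ℕ}
    (Φ : Matrix (Fin nB) (Fin nB) ℂ →ₗ[ℂ] Matrix (Fin nA) (Fin nA) ℂ) : Prop :=
  ∀ (k : ℕ) (X : Matrix (Fin k × Fin nB) (Fin k × Fin nB) ℂ),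
    X.PosSemidef → (amp k Φ X).PosSemidef

/-- The (Heisenberg picture) channel `T(b) = Vᴴ (b ⊗ 1_E) V` defined by a Stinespring
operator `V : H_A → H_B ⊗ H_E`. -/
noncomputable def stine {nA nB nE : ℕ} (V : Matrix (Fin nB × Fin nE) (Fin nA) ℂ) :
    Matrix (Fin nB) (Fin nB) ℂ →ₗ[ℂ] Matrix (Fin nA) (Fin nA) ℂ where
  toFun b := Vᴴ * (b ⊗ₖ (1 : Matrix (Fin nE) (Fin nE) ℂ)) * V
  map_add' b c := by simp [Matrix.add_kronecker, Matrix.add_mul, Matrix.mul_add]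
  map_smul' c b := by simp [Matrix.smul_kronecker, Matrix.smul_mul, Matrix.mul_smul]

/-- The complementary channel `T_E(e) = Vᴴ (1_B ⊗ e) V`. -/
noncomputable def stineC {nA nB nE : ℕ} (V : Matrix (Fin nB × Fin nE) (Fin nA) ℂ) :
    Matrix (Fin nE) (Fin nE) ℂ →ₗ[ℂ] Matrix (Fin nA) (Fin nA) ℂ where
  toFun e := Vᴴ * ((1 : Matrix (Fin nB) (Fin nB) ℂ) ⊗ₖ e) * V
  map_add' b c := by simp [Matrix.kronecker_add, Matrix.add_mul, Matrix.mul_add]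
  map_smul' c b := by simp [Matrix.kronecker_smul, Matrix.smul_mul, Matrix.mul_smul]

/-- The Schrödinger (trace-duality) adjoint `Φ_*`, determined by
`tr (Φ_*(ρ) b) = tr (ρ Φ(b))`. -/
noncomputable def dualMap {nB nA : ℕ}
    (Φ : Matrix (Fin nB) (Fin nB) ℂ →ₗ[ℂ] Matrix (Fin nA) (Fin nA) ℂ) :
    Matrix (Fin nA) (Fin nA) ℂ →ₗ[ℂ] Matrix (Fin nB) (Fin nB) ℂ where
  toFun ρ := Matrix.of fun i j => (ρ * Φ (Matrix.single j i 1)).trace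
  map_add' ρ τ := by ext i j; simp [Matrix.add_mul]
  map_smul' c ρ := by ext i j; simp [Matrix.smul_mul]

/-- Outer product `|ψ⟩⟨ψ|`. -/
def outer {n : Type*} (ψ : n → ℂ) : Matrix n n ℂ :=
  Matrix.vecMulVec ψ (star ψ)

/-- Partial trace over the second tensor factor. -/
noncomputable def ptrace2 {a e : Type*} [Fintype e] (M : Matrix (a × e) (a × e) ℂ) : Matrix a a ℂ :=
  Matrix.of fun i j => ∑ k, M (i, k) (j, k)

/-- Partial trace over the first tensor factor. -/
noncomputable def ptrace1 {a e : Type*} [Fintype a] (M : Matrix (a × e) (a × e) ℂ) : Matrix e e ℂ :=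
  Matrix.of fun i j => ∑ k, M (k, i) (k, j)

/-- The Schrödinger picture channel `T_*(ρ) = tr_E (V ρ Vᴴ)`. -/
noncomputable def schrod {nA nB nE : ℕ} (V : Matrix (Fin nB × Fin nE) (Fin nA) ℂ) :
    Matrix (Fin nA) (Fin nA) ℂ →ₗ[ℂ] Matrix (Fin nB) (Fin nB) ℂ where
  toFun ρ := ptrace2 (V * ρ * Vᴴ)
  map_add' ρ τ := by
    ext i j
    simp [ptrace2, Matrix.add_mul, Matrix.mul_add, Finset.sum_add_distrib]
  map_smul' c ρ := by
    ext i j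
    simp [ptrace2, Matrix.smul_mul, Matrix.mul_smul, Finset.mul_sum]

/-- Completely depolarizing channel `S(e) = tr(σ e) 1_A` (Heisenberg picture). -/
noncomputable def depol {nE nA : ℕ} (σ : Matrix (Fin nE) (Fin nE) ℂ) :
    Matrix (Fin nE) (Fin nE) ℂ →ₗ[ℂ] Matrix (Fin nA) (Fin nA) ℂ where
  toFun e := (σ * e).trace • 1
  map_add' e f := by simp [Matrix.mul_add, add_smul]
  map_smul' c e := by simp [Matrix.mul_smul, smul_smul]

/-- The transpose map `Θ(e) = eᵀ`. -/
def transposeMap (ν : ℕ) : Matrix (Fin ν) (Fin ν) ℂ →ₗ[ℂ] Matrix (Fin ν) (Fin ν) ℂ where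
  toFun e := eᵀ
  map_add' := by intros; simp
  map_smul' := by intros; simp

/-- The maximally depolarizing channel `S(e) = (1/ν) tr(e) 1`. -/
noncomputable def depolS (ν : ℕ) :
    Matrix (Fin ν) (Fin ν) ℂ →ₗ[ℂ] Matrix (Fin ν) (Fin ν) ℂ :=
  depol ((ν : ℂ)⁻¹ • (1 : Matrix (Fin ν) (Fin ν) ℂ))

/-- `T_p = (1-p) S + p Θ`. -/
noncomputable def Tp (ν : ℕ) (p : ℝ) :
    Matrix (Fin ν) (Fin ν) ℂ →ₗ[ℂ] Matrix (Fin ν) (Fin ν) ℂ :=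
  (((1 - p : ℝ) : ℂ)) • depolS ν + ((p : ℝ) : ℂ) • transposeMap ν

/-- The flip (swap) operator `F = Σ_{i,j} |i,j⟩⟨j,i|`. -/
def flipOp (ν : ℕ) : Matrix (Fin ν × Fin ν) (Fin ν × Fin ν) ℂ :=
  Matrix.of fun p q => if p.1 = q.2 ∧ p.2 = q.1 then 1 else 0

/-- Amplification on the right factor: `Φ ⊗ id_k`. -/
noncomputable def ampL {nB nA : ℕ} (k : ℕ)
    (Φ : Matrix (Fin nB) (Fin nB) ℂ →ₗ[ℂ] Matrix (Fin nA) (Fin nA) ℂ) :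
    Matrix (Fin nB × Fin k) (Fin nB × Fin k) ℂ →ₗ[ℂ]
      Matrix (Fin nA × Fin k) (Fin nA × Fin k) ℂ where
  toFun X := Matrix.of fun p q => Φ (Matrix.of fun a b => X (a, p.2) (b, q.2)) p.1 q.1
  map_add' X Y := by
    ext p q
    have h : (Matrix.of fun a b => (X + Y) (a, p.2) (b, q.2))
        = (Matrix.of fun a b => X (a, p.2) (b, q.2))
          + Matrix.of fun a b => Y (a, p.2) (b, q.2) := by
      ext a b; simp
    show Φ (Matrix.of fun a b => (X + Y) (a, p.2) (b, q.2)) p.1 q.1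
      = Φ (Matrix.of fun a b => X (a, p.2) (b, q.2)) p.1 q.1
        + Φ (Matrix.of fun a b => Y (a, p.2) (b, q.2)) p.1 q.1
    rw [h, map_add]; rfl
  map_smul' c X := by
    ext p q
    have h : (Matrix.of fun a b => (c • X) (a, p.2) (b, q.2))
        = c • Matrix.of fun a b => X (a, p.2) (b, q.2) := by
      ext a b; simp
    show Φ (Matrix.of fun a b => (c • X) (a, p.2) (b, q.2)) p.1 q.1
      = (c • Φ (Matrix.of fun a b => X (a, p.2) (b, q.2))) p.1 q.1
    rw [h, _root_.map_smul]

/-- Operational fidelity of two channels. -/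
noncomputable def opFid {nA nB : ℕ}
    (T₁ T₂ : Matrix (Fin nB) (Fin nB) ℂ →ₗ[ℂ] Matrix (Fin nA) (Fin nA) ℂ) : ℝ :=
  ⨅ ψ : {ψ : Fin nA × Fin nA → ℂ // ∑ x, ‖ψ x‖ ^ 2 = 1},
    fid (amp nA (dualMap T₁) (outer ψ.1)) (amp nA (dualMap T₂) (outer ψ.1))

/-- Minimality of a Stinespring representation. -/
def Minimal {nA nB nE : ℕ} (V : Matrix (Fin nB × Fin nE) (Fin nA) ℂ) : Prop :=
  Submodule.span ℂ {x : Fin nB × Fin nE → ℂ |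
    ∃ (b : Matrix (Fin nB) (Fin nB) ℂ) (φ : Fin nA → ℂ),
      x = (b ⊗ₖ (1 : Matrix (Fin nE) (Fin nE) ℂ)).mulVec (V.mulVec φ)} = ⊤



section Aux

variable {m n l : Type*} [Fintype m] [Fintype n] [Fintype l]
  [DecidableEq m] [DecidableEq n] [DecidableEq l]

lemma norm_wlp_symm (v : m → ℂ) :
    ‖(WithLp.equiv 2 (m → ℂ)).symm v‖ = Real.sqrt (∑ i, ‖v i‖ ^ 2) :=
  EuclideanSpace.norm_eq _

lemma opNorm_mat_le (A : Matrix m n ℂ) {c : ℝ} (hc : 0 ≤ c)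
    (h : ∀ x : n → ℂ, ‖(WithLp.equiv 2 (m → ℂ)).symm (A *ᵥ x)‖
      ≤ c * ‖(WithLp.equiv 2 (n → ℂ)).symm x‖) :
    ‖A‖ ≤ c := by
  rw [Matrix.l2_opNorm_def]
  refine ContinuousLinearMap.opNorm_le_bound _ hc fun x => ?_
  have := h ((WithLp.equiv 2 (n → ℂ)) x)
  simpa [Matrix.toEuclideanLin_apply, LinearEquiv.trans_apply] using this

lemma entry_le_norm (A : Matrix m n ℂ) (i : m) (j : n) : ‖A i j‖ ≤ ‖A‖ := by
  have h := Matrix.l2_opNorm_mulVec A ((WithLp.equiv 2 (n → ℂ)).symm (Pi.single j 1))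
  have h1 : ‖(EuclideanSpace.equiv m ℂ).symm (A *ᵥ (WithLp.equiv 2 (n → ℂ)).symm (Pi.single j 1))‖
      = Real.sqrt (∑ i, ‖(A *ᵥ Pi.single j 1) i‖ ^ 2) := EuclideanSpace.norm_eq _
  have h2 : ‖((WithLp.equiv 2 (n → ℂ)).symm (Pi.single j (1:ℂ)))‖ = 1 := by
    simpa using EuclideanSpace.norm_single (𝕜 := ℂ) j 1
  have h3 : ‖A i j‖ ≤ Real.sqrt (∑ i, ‖(A *ᵥ Pi.single j 1) i‖ ^ 2) := by
    have hij : (A *ᵥ Pi.single j (1:ℂ)) i = A i j := by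
      simp [Matrix.mulVec_single]
    calc ‖A i j‖ = Real.sqrt (‖(A *ᵥ Pi.single j 1) i‖ ^ 2) := by
          rw [hij, Real.sqrt_sq (norm_nonneg _)]
      _ ≤ _ := by
          apply Real.sqrt_le_sqrt
          exact Finset.single_le_sum (f := fun i => ‖(A *ᵥ Pi.single j (1:ℂ)) i‖ ^ 2)
            (fun _ _ => by positivity) (Finset.mem_univ i)
  calc ‖A i j‖ ≤ Real.sqrt (∑ i, ‖(A *ᵥ Pi.single j 1) i‖ ^ 2) := h3
    _ = _ := h1.symm
    _ ≤ ‖A‖ * 1 := by simpa [h2] using h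
    _ = ‖A‖ := mul_one _

lemma norm_trace_le (A : Matrix n n ℂ) : ‖A.trace‖ ≤ (Fintype.card n : ℝ) * ‖A‖ := by
  calc ‖A.trace‖ ≤ ∑ i, ‖A i i‖ := norm_sum_le _ _
    _ ≤ ∑ _i : n, ‖A‖ := Finset.sum_le_sum fun i _ => entry_le_norm A i i
    _ = (Fintype.card n : ℝ) * ‖A‖ := by
        simp [Finset.sum_const, Finset.card_univ, nsmul_eq_mul]

lemma norm_transpose_le (A : Matrix m n ℂ) : ‖Aᵀ‖ ≤ ‖A‖ := by
  refine opNorm_mat_le _ (norm_nonneg _) fun x => ?_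
  have key : Aᵀ *ᵥ x = star (Aᴴ *ᵥ star x) := by
    ext i
    simp [Matrix.mulVec, dotProduct, Matrix.transpose_apply,
      Matrix.conjTranspose_apply, star_mul', mul_comm]
  rw [key, norm_wlp_symm]
  have h1 : Real.sqrt (∑ i, ‖(star (Aᴴ *ᵥ star x)) i‖ ^ 2)
      = ‖(WithLp.equiv 2 (n → ℂ)).symm (Aᴴ *ᵥ star x)‖ := by
    rw [norm_wlp_symm]
    congr 1
    exact Finset.sum_congr rfl fun i _ => by simp
  rw [h1]
  have h2 := Matrix.l2_opNorm_mulVec Aᴴ ((WithLp.equiv 2 (m → ℂ)).symm (star x))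
  have h3 : ‖((WithLp.equiv 2 (m → ℂ)).symm (star x))‖
      = ‖(WithLp.equiv 2 (m → ℂ)).symm x‖ := by
    rw [norm_wlp_symm, norm_wlp_symm]
    congr 1
    exact Finset.sum_congr rfl fun i _ => by simp
  calc ‖(WithLp.equiv 2 (n → ℂ)).symm (Aᴴ *ᵥ star x)‖
      ≤ ‖Aᴴ‖ * ‖((WithLp.equiv 2 (m → ℂ)).symm (star x))‖ := h2
    _ = ‖A‖ * ‖(WithLp.equiv 2 (m → ℂ)).symm x‖ := by
        rw [Matrix.l2_opNorm_conjTranspose, h3]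

end Aux

section Main

variable {ν : ℕ}

/-- The difference map applied to a matrix. -/
lemma Tdiff_apply (ν : ℕ) (p : ℝ) (e : Matrix (Fin ν) (Fin ν) ℂ) :
    (Tp ν p - depolS ν) e = ((p : ℂ)) • (eᵀ - ((ν : ℂ)⁻¹ * e.trace) • 1) := by
  ext i j
  simp only [Tp, depolS, depol, transposeMap, LinearMap.sub_apply, LinearMap.add_apply,
    LinearMap.smul_apply, LinearMap.coe_mk, AddHom.coe_mk, Matrix.smul_apply,
    Matrix.sub_apply, Matrix.add_apply, Matrix.smul_mul, Matrix.trace_smul, smul_eq_mul,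
    Matrix.transpose_apply, Matrix.one_apply]
  have ht : ∀ i j, (transposeMap ν) e i j = e j i := fun _ _ => rfl
  simp only [transposeMap] at ht
  rw [ht]
  by_cases h : i = j <;> simp [h] <;> push_cast <;> ring

lemma amp_apply {nB nA : ℕ} (k : ℕ)
    (Φ : Matrix (Fin nB) (Fin nB) ℂ →ₗ[ℂ] Matrix (Fin nA) (Fin nA) ℂ)
    (X : Matrix (Fin k × Fin nB) (Fin k × Fin nB) ℂ) (p q : Fin k × Fin nA) :
    amp k Φ X p q = Φ (Matrix.of fun a b => X (p.1, a) (q.1, b)) p.2 q.2 := rfl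

/-- The partial isometries `1 ⊗ E_{ab}` (defined entrywise). -/
def Mab (k ν : ℕ) (a b : Fin ν) : Matrix (Fin k × Fin ν) (Fin k × Fin ν) ℂ :=
  Matrix.of fun p q => if p.2 = a ∧ q.2 = b ∧ p.1 = q.1 then 1 else 0

lemma Mab_mul_X (k ν : ℕ) (a b : Fin ν) (X : Matrix (Fin k × Fin ν) (Fin k × Fin ν) ℂ)
    (p : Fin k × Fin ν) (q' : Fin k × Fin ν) :
    (Mab k ν a b * X) p q' = if p.2 = a then X (p.1, b) q' else 0 := by
  simp only [Matrix.mul_apply, Mab, Matrix.of_apply]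
  rw [Fintype.sum_prod_type]
  by_cases h : p.2 = a
  · simp only [h, true_and, if_pos rfl]
    rw [Finset.sum_eq_single p.1]
    · rw [Finset.sum_eq_single b]
      · simp
      · intro x _ hx; simp [hx]
      · simp
    · intro x _ hx
      apply Finset.sum_eq_zero
      intro y _
      simp [Ne.symm hx]
    · simp
  · simp [h]

lemma X_mul_Mab (k ν : ℕ) (c d : Fin ν) (X : Matrix (Fin k × Fin ν) (Fin k × Fin ν) ℂ)
    (p' : Fin k × Fin ν) (q : Fin k × Fin ν) :
    (X * Mab k ν c d) p' q = if q.2 = d then X p' (q.1, c) else 0 := by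
  simp only [Matrix.mul_apply, Mab, Matrix.of_apply]
  rw [Fintype.sum_prod_type]
  by_cases h : q.2 = d
  · simp only [h, true_and]
    rw [Finset.sum_eq_single q.1]
    · rw [Finset.sum_eq_single c]
      · simp
      · intro x _ hx; simp [hx]
      · simp
    · intro x _ hx
      apply Finset.sum_eq_zero
      intro y _
      simp [hx]
    · simp
  · have : ∀ x : Fin k, ∀ y : Fin ν,
        X p' (x, y) * (if y = c ∧ q.2 = d ∧ x = q.1 then (1:ℂ) else 0) = 0 := by
      intro x y
      have hh : ¬(y = c ∧ q.2 = d ∧ x = q.1) := fun hh => h hh.2.1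
      simp [hh]
    simp [this, h]

lemma Mab_X_Mab (k ν : ℕ) (a b c d : Fin ν)
    (X : Matrix (Fin k × Fin ν) (Fin k × Fin ν) ℂ) (p q : Fin k × Fin ν) :
    (Mab k ν a b * X * Mab k ν c d) p q
      = (if p.2 = a then 1 else 0) * (if q.2 = d then 1 else 0) * X (p.1, b) (q.1, c) := by
  rw [Matrix.mul_assoc, Mab_mul_X, X_mul_Mab]
  by_cases h1 : p.2 = a <;> by_cases h2 : q.2 = d <;> simp [h1, h2]

lemma Mab_mulVec (k ν : ℕ) (a b : Fin ν) (x : Fin k × Fin ν → ℂ) (p : Fin k × Fin ν) :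
    (Mab k ν a b *ᵥ x) p = if p.2 = a then x (p.1, b) else 0 := by
  simp only [Matrix.mulVec, dotProduct, Mab, Matrix.of_apply]
  rw [Fintype.sum_prod_type]
  by_cases h : p.2 = a
  · simp only [h, true_and, if_pos rfl]
    rw [Finset.sum_eq_single p.1]
    · rw [Finset.sum_eq_single b]
      · simp
      · intro x _ hx; simp [hx]
      · simp
    · intro x _ hx
      apply Finset.sum_eq_zero
      intro y _
      simp [Ne.symm hx]
    · simp
  · simp [h]

lemma Mab_norm_le (k ν : ℕ) (a b : Fin ν) : ‖Mab k ν a b‖ ≤ 1 := by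
  refine opNorm_mat_le _ zero_le_one fun x => ?_
  rw [norm_wlp_symm, norm_wlp_symm, one_mul]
  apply Real.sqrt_le_sqrt
  have hL : ∑ p : Fin k × Fin ν, ‖(Mab k ν a b *ᵥ x) p‖ ^ 2
      = ∑ p1 : Fin k, ‖x (p1, b)‖ ^ 2 := by
    rw [Fintype.sum_prod_type]
    refine Finset.sum_congr rfl fun p1 _ => ?_
    rw [Finset.sum_eq_single a]
    · rw [Mab_mulVec]; simp
    · intro y _ hy; rw [Mab_mulVec]; simp [hy]
    · simp
  rw [hL, Fintype.sum_prod_type]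
  refine Finset.sum_le_sum fun p1 _ => ?_
  exact Finset.single_le_sum (f := fun p2 => ‖x (p1, p2)‖ ^ 2)
    (fun _ _ => by positivity) (Finset.mem_univ b)

/-- Uniform bound on all amplifications. -/
lemma amp_bound (hν : 1 ≤ ν) (k : ℕ)
    (X : Matrix (Fin k × Fin ν) (Fin k × Fin ν) ℂ) :
    ‖amp k (Tp ν (1 / ((ν : ℝ) + 1)) - depolS ν) X‖ ≤ (ν : ℝ) * ‖X‖ := by
  set c : ℝ := 1 / ((ν : ℝ) + 1) with hc
  have hν0 : (0:ℝ) < ν := by exact_mod_cast hν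
  -- the explicit form of the amplification
  have key : amp k (Tp ν c - depolS ν) X
      = (c : ℂ) • ((∑ a, ∑ b, Mab k ν a b * X * Mab k ν a b)
          - (ν : ℂ)⁻¹ • (∑ a, ∑ b, Mab k ν a b * X * Mab k ν b a)) := by
    ext p q
    rw [amp_apply, Tdiff_apply]
    simp only [Matrix.smul_apply, Matrix.sub_apply, Matrix.sum_apply, smul_eq_mul,
      Matrix.transpose_apply, Matrix.of_apply, Matrix.one_apply, Matrix.trace,
      Matrix.diag]
    congr 1
    have h1 : (∑ a, ∑ b, (Mab k ν a b * X * Mab k ν a b) p q) = X (p.1, q.2) (q.1, p.2) := by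
      have e1 : ∀ a b, (Mab k ν a b * X * Mab k ν a b) p q
          = (if p.2 = a then 1 else 0) * (if q.2 = b then 1 else 0) * X (p.1, b) (q.1, a) :=
        fun a b => Mab_X_Mab k ν a b a b X p q
      simp only [e1]
      rw [Finset.sum_eq_single p.2]
      · rw [Finset.sum_eq_single q.2]
        · simp
        · intro x _ hx; simp [Ne.symm hx]
        · simp
      · intro x _ hx
        apply Finset.sum_eq_zero
        intro y _
        simp [Ne.symm hx]
      · simp
    have h2 : (∑ a, ∑ b, (Mab k ν a b * X * Mab k ν b a) p q)
        = if p.2 = q.2 then ∑ e, X (p.1, e) (q.1, e) else 0 := by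
      have e2 : ∀ a b, (Mab k ν a b * X * Mab k ν b a) p q
          = (if p.2 = a then 1 else 0) * (if q.2 = a then 1 else 0) * X (p.1, b) (q.1, b) :=
        fun a b => Mab_X_Mab k ν a b b a X p q
      simp only [e2]
      rw [Finset.sum_eq_single p.2]
      · by_cases h : p.2 = q.2
        · simp [h, eq_comm]
        · have h' : ¬ q.2 = p.2 := fun hh => h hh.symm
          simp [h, h']
      · intro x _ hx
        apply Finset.sum_eq_zero
        intro y _
        simp [Ne.symm hx]
      · simp
    rw [h1, h2]
    by_cases h : p.2 = q.2 <;> simp [h, mul_comm]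
  rw [key]
  have hmul_le : ∀ (Y Z : Matrix (Fin k × Fin ν) (Fin k × Fin ν) ℂ),
      ‖Y‖ ≤ 1 → ‖Z‖ ≤ 1 → ‖Y * X * Z‖ ≤ ‖X‖ := by
    intro Y Z hY hZ
    calc ‖Y * X * Z‖ ≤ ‖Y * X‖ * ‖Z‖ := Matrix.l2_opNorm_mul _ _
      _ ≤ (‖Y‖ * ‖X‖) * ‖Z‖ :=
          mul_le_mul_of_nonneg_right (Matrix.l2_opNorm_mul Y X) (norm_nonneg Z)
      _ ≤ (1 * ‖X‖) * 1 :=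
          mul_le_mul (mul_le_mul hY le_rfl (norm_nonneg X) zero_le_one) hZ
            (norm_nonneg Z) (by positivity)
      _ = ‖X‖ := by ring
  have hb1 : ‖∑ a, ∑ b, Mab k ν a b * X * Mab k ν a b‖ ≤ (ν:ℝ)^2 * ‖X‖ := by
    calc ‖∑ a, ∑ b, Mab k ν a b * X * Mab k ν a b‖
        ≤ ∑ a, ∑ b : Fin ν, ‖Mab k ν a b * X * Mab k ν a b‖ :=
          (norm_sum_le _ _).trans (Finset.sum_le_sum fun a _ => norm_sum_le _ _)
      _ ≤ ∑ _a : Fin ν, ∑ _b : Fin ν, ‖X‖ :=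
          Finset.sum_le_sum fun a _ => Finset.sum_le_sum fun b _ =>
            hmul_le _ _ (Mab_norm_le k ν a b) (Mab_norm_le k ν a b)
      _ = (ν:ℝ)^2 * ‖X‖ := by
          simp [Finset.sum_const, Finset.card_univ]; ring
  have hb2 : ‖∑ a, ∑ b, Mab k ν a b * X * Mab k ν b a‖ ≤ (ν:ℝ)^2 * ‖X‖ := by
    calc ‖∑ a, ∑ b, Mab k ν a b * X * Mab k ν b a‖
        ≤ ∑ a, ∑ b : Fin ν, ‖Mab k ν a b * X * Mab k ν b a‖ :=
          (norm_sum_le _ _).trans (Finset.sum_le_sum fun a _ => norm_sum_le _ _)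
      _ ≤ ∑ _a : Fin ν, ∑ _b : Fin ν, ‖X‖ :=
          Finset.sum_le_sum fun a _ => Finset.sum_le_sum fun b _ =>
            hmul_le _ _ (Mab_norm_le k ν a b) (Mab_norm_le k ν b a)
      _ = (ν:ℝ)^2 * ‖X‖ := by
          simp [Finset.sum_const, Finset.card_univ]; ring
  have hcnorm : ‖((c:ℝ) : ℂ)‖ = c := by
    rw [Complex.norm_real]
    exact abs_of_nonneg (by positivity)
  have hn : ‖(ν : ℂ)⁻¹ • (∑ a, ∑ b, Mab k ν a b * X * Mab k ν b a)‖
      = (ν:ℝ)⁻¹ * ‖∑ a, ∑ b, Mab k ν a b * X * Mab k ν b a‖ := by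
    rw [norm_smul, norm_inv]
    congr 2
    simpa using Complex.norm_natCast ν
  calc ‖(c : ℂ) • ((∑ a, ∑ b, Mab k ν a b * X * Mab k ν a b)
        - (ν : ℂ)⁻¹ • (∑ a, ∑ b, Mab k ν a b * X * Mab k ν b a))‖
      = c * ‖(∑ a, ∑ b, Mab k ν a b * X * Mab k ν a b)
        - (ν : ℂ)⁻¹ • (∑ a, ∑ b, Mab k ν a b * X * Mab k ν b a)‖ := by
        rw [norm_smul, hcnorm]
    _ ≤ c * (‖∑ a, ∑ b, Mab k ν a b * X * Mab k ν a b‖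
        + (ν:ℝ)⁻¹ * ‖∑ a, ∑ b, Mab k ν a b * X * Mab k ν b a‖) := by
        have hns := norm_sub_le (∑ a, ∑ b, Mab k ν a b * X * Mab k ν a b)
          ((ν : ℂ)⁻¹ • (∑ a, ∑ b, Mab k ν a b * X * Mab k ν b a))
        rw [hn] at hns
        have hc0 : 0 ≤ c := by positivity
        nlinarith
    _ ≤ c * ((ν:ℝ)^2 * ‖X‖ + (ν:ℝ)⁻¹ * ((ν:ℝ)^2 * ‖X‖)) := by
        have hc0 : 0 ≤ c := by positivity
        have hνi : (0:ℝ) ≤ (ν:ℝ)⁻¹ := by positivity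
        nlinarith [hb1, hb2, mul_le_mul_of_nonneg_left hb2 hνi]
    _ = (ν : ℝ) * ‖X‖ := by
        rw [hc]
        field_simp

lemma opNorm_amp_le (hν : 1 ≤ ν) (k : ℕ) :
    opNorm (amp k (Tp ν (1 / ((ν : ℝ) + 1)) - depolS ν)) ≤ (ν : ℝ) := by
  have hν0 : (0:ℝ) ≤ ν := by positivity
  refine ContinuousLinearMap.opNorm_le_bound _ hν0 fun X => ?_
  simpa using amp_bound hν k X

end Main




section Main2

lemma norm_one_mat_le {n : Type*} [Fintype n] [DecidableEq n] :
    ‖(1 : Matrix n n ℂ)‖ ≤ 1 := by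
  refine opNorm_mat_le _ zero_le_one fun x => ?_
  rw [Matrix.one_mulVec, one_mul]

lemma flip_norm_le (ν : ℕ) : ‖flipOp ν‖ ≤ 1 := by
  refine opNorm_mat_le _ zero_le_one fun x => ?_
  have key : flipOp ν *ᵥ x = fun p => x (p.2, p.1) := by
    funext p
    simp only [Matrix.mulVec, dotProduct, flipOp, Matrix.of_apply]
    rw [Fintype.sum_prod_type]
    rw [Finset.sum_eq_single p.2]
    · rw [Finset.sum_eq_single p.1]
      · simp
      · intro y _ hy; simp [Ne.symm hy]
      · simp
    · intro y _ hy
      apply Finset.sum_eq_zero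
      intro z _
      simp [Ne.symm hy]
    · simp
  rw [key, norm_wlp_symm, norm_wlp_symm, one_mul]
  apply Real.sqrt_le_sqrt
  refine le_of_eq (Fintype.sum_equiv (Equiv.prodComm _ _) _ _ fun p => ?_)
  rfl

/-- The diagonal (maximally entangled) vector. -/
def diagVec (ν : ℕ) : Fin ν × Fin ν → ℂ := fun q => if q.1 = q.2 then 1 else 0

lemma amp_flip_entry (ν : ℕ) (c : ℝ) (p q : Fin ν × Fin ν) :
    amp ν (Tp ν c - depolS ν) (flipOp ν) p q
      = (c : ℂ) * ((if p.1 = p.2 then 1 else 0) * (if q.2 = q.1 then 1 else 0)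
          - (ν : ℂ)⁻¹ * ((if p.1 = q.1 then 1 else 0) * (if p.2 = q.2 then 1 else 0))) := by
  rw [amp_apply, Tdiff_apply]
  simp only [Matrix.smul_apply, Matrix.sub_apply, smul_eq_mul, Matrix.transpose_apply,
    Matrix.of_apply, Matrix.one_apply, Matrix.trace, Matrix.diag, flipOp]
  have htr : (∑ a, if p.1 = a ∧ a = q.1 then (1:ℂ) else 0) = if p.1 = q.1 then 1 else 0 := by
    rw [Finset.sum_eq_single p.1]
    · by_cases h : p.1 = q.1 <;> simp [h]
    · intro y _ hy; simp [Ne.symm hy]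
    · simp
  rw [htr]
  by_cases h1 : p.1 = p.2 <;> by_cases h2 : q.2 = q.1 <;>
    simp only [h1, h2, true_and, false_and, and_true, and_false, if_true, if_false,
      eq_self_iff_true, if_pos, if_neg, not_false_iff, mul_one, mul_zero, one_mul,
      zero_mul] <;> simp [h1, h2] <;> ring

lemma amp_flip_mulVec (ν : ℕ) (c : ℝ) :
    (amp ν (Tp ν c - depolS ν) (flipOp ν)) *ᵥ diagVec ν
      = fun p => ((c : ℂ) * ((ν : ℂ) - (ν : ℂ)⁻¹)) * diagVec ν p := by
  funext p
  show (∑ q, amp ν (Tp ν c - depolS ν) (flipOp ν) p q * diagVec ν q) = _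
  have hterm : ∀ q : Fin ν × Fin ν,
      amp ν (Tp ν c - depolS ν) (flipOp ν) p q * diagVec ν q
        = (c : ℂ) * ((if p.1 = p.2 then 1 else 0) * (if q.1 = q.2 then 1 else 0)
            - (ν : ℂ)⁻¹ * ((if p.1 = q.1 then 1 else 0) * (if p.2 = q.2 then 1 else 0)
              * (if q.1 = q.2 then 1 else 0))) := by
    intro q
    rw [amp_flip_entry]
    show _ * (if q.1 = q.2 then (1:ℂ) else 0) = _
    by_cases h : q.1 = q.2 <;> simp [h] <;> ring
  rw [Finset.sum_congr rfl fun q _ => hterm q]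
  have hS1 : (∑ q : Fin ν × Fin ν, if q.1 = q.2 then (1:ℂ) else 0) = (ν : ℂ) := by
    rw [Fintype.sum_prod_type]
    have : ∀ q1 : Fin ν, (∑ q2 : Fin ν, if q1 = q2 then (1:ℂ) else 0) = 1 := by
      intro q1
      rw [Finset.sum_eq_single q1] <;> simp +contextual [Ne.symm, eq_comm]
    simp [this]
  have hS2 : (∑ q : Fin ν × Fin ν, (if p.1 = q.1 then (1:ℂ) else 0)
      * (if p.2 = q.2 then 1 else 0) * (if q.1 = q.2 then 1 else 0))
        = if p.1 = p.2 then 1 else 0 := by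
    rw [Fintype.sum_prod_type]
    rw [Finset.sum_eq_single p.1]
    · rw [Finset.sum_eq_single p.2]
      · by_cases h : p.1 = p.2 <;> simp [h]
      · intro y _ hy; simp [Ne.symm hy]
      · simp
    · intro y _ hy
      apply Finset.sum_eq_zero
      intro z _
      simp [Ne.symm hy]
    · simp
  rw [show (∑ q : Fin ν × Fin ν, (c : ℂ) * ((if p.1 = p.2 then 1 else 0)
      * (if q.1 = q.2 then 1 else 0)
      - (ν : ℂ)⁻¹ * ((if p.1 = q.1 then 1 else 0) * (if p.2 = q.2 then 1 else 0)
        * (if q.1 = q.2 then 1 else 0))))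
    = (c : ℂ) * ((if p.1 = p.2 then 1 else 0)
      * (∑ q : Fin ν × Fin ν, if q.1 = q.2 then (1:ℂ) else 0)
      - (ν : ℂ)⁻¹ * (∑ q : Fin ν × Fin ν, (if p.1 = q.1 then (1:ℂ) else 0)
        * (if p.2 = q.2 then 1 else 0) * (if q.1 = q.2 then 1 else 0))) from ?_]
  · rw [hS1, hS2]
    show _ = _ * (if p.1 = p.2 then (1:ℂ) else 0)
    by_cases h : p.1 = p.2 <;> simp [h] <;> ring
  · rw [← Finset.mul_sum]
    congr 1
    rw [Finset.sum_sub_distrib, ← Finset.mul_sum, ← Finset.mul_sum]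

end Main2

theorem norm_cbNorm_separation {ν : ℕ} (hν : 1 ≤ ν) :
    opNorm (Tp ν (1 / ((ν : ℝ) + 1)) - depolS ν) ≤ 2 / ((ν : ℝ) + 1) ∧
      ((ν : ℝ) - 1) / ((ν : ℝ) + 1) ≤ cbNorm (Tp ν (1 / ((ν : ℝ) + 1)) - depolS ν) := by
  have hν0 : (0:ℝ) < ν := by exact_mod_cast hν
  have hν1 : (0:ℝ) < (ν:ℝ) + 1 := by linarith
  constructor
  · -- operator norm bound
    show ‖LinearMap.toContinuousLinearMap (Tp ν (1 / ((ν : ℝ) + 1)) - depolS ν)‖ ≤ _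
    refine ContinuousLinearMap.opNorm_le_bound _ (by positivity) fun X => ?_
    have happ : (LinearMap.toContinuousLinearMap (Tp ν (1 / ((ν : ℝ) + 1)) - depolS ν)) X
        = (Tp ν (1 / ((ν : ℝ) + 1)) - depolS ν) X := rfl
    rw [happ, Tdiff_apply]
    have htn : ‖((ν : ℂ)⁻¹ * X.trace)‖ ≤ ‖X‖ := by
      rw [norm_mul, norm_inv]
      have h1 : ‖(ν:ℂ)‖ = (ν:ℝ) := by simpa using Complex.norm_natCast ν
      rw [h1]
      have h2 := norm_trace_le X
      rw [Fintype.card_fin] at h2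
      calc (ν:ℝ)⁻¹ * ‖X.trace‖ ≤ (ν:ℝ)⁻¹ * ((ν:ℝ) * ‖X‖) :=
            mul_le_mul_of_nonneg_left h2 (by positivity)
        _ = ‖X‖ := by field_simp
    calc ‖((1 / ((ν : ℝ) + 1) : ℝ) : ℂ) • (Xᵀ - ((ν : ℂ)⁻¹ * X.trace) • 1)‖
        = (1 / ((ν : ℝ) + 1)) * ‖Xᵀ - ((ν : ℂ)⁻¹ * X.trace) • 1‖ := by
          rw [norm_smul, Complex.norm_real, Real.norm_eq_abs, abs_of_nonneg (by positivity)]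
      _ ≤ (1 / ((ν : ℝ) + 1))
          * (‖Xᵀ‖ + ‖((ν : ℂ)⁻¹ * X.trace) • (1 : Matrix (Fin ν) (Fin ν) ℂ)‖) :=
          mul_le_mul_of_nonneg_left (norm_sub_le _ _) (by positivity)
      _ ≤ (1 / ((ν : ℝ) + 1)) * (‖X‖ + ‖X‖) := by
          refine mul_le_mul_of_nonneg_left ?_ (by positivity)
          have ht := norm_transpose_le X
          have hsm : ‖((ν : ℂ)⁻¹ * X.trace) • (1 : Matrix (Fin ν) (Fin ν) ℂ)‖ ≤ ‖X‖ := by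
            rw [norm_smul]
            calc ‖(ν : ℂ)⁻¹ * X.trace‖ * ‖(1 : Matrix (Fin ν) (Fin ν) ℂ)‖
                ≤ ‖X‖ * 1 := mul_le_mul htn norm_one_mat_le (norm_nonneg _) (norm_nonneg X)
              _ = ‖X‖ := mul_one _
          linarith
      _ = 2 / ((ν : ℝ) + 1) * ‖X‖ := by ring
  · -- cb norm bound
    set Φ := Tp ν (1 / ((ν : ℝ) + 1)) - depolS ν with hΦ
    have hbdd : BddAbove (Set.range fun k => opNorm (amp k Φ)) := by
      refine ⟨(ν:ℝ), ?_⟩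
      rintro x ⟨k, rfl⟩
      exact opNorm_amp_le hν k
    have hsup : opNorm (amp ν Φ) ≤ cbNorm Φ := le_ciSup hbdd ν
    refine le_trans ?_ hsup
    set M := amp ν Φ (flipOp ν) with hM
    set μr : ℝ := ((ν:ℝ) - 1)/ν with hμr
    have hμr0 : 0 ≤ μr := by
      rw [hμr]
      have : (1:ℝ) ≤ (ν:ℝ) := by exact_mod_cast hν
      apply div_nonneg <;> linarith
    have hmu : M *ᵥ diagVec ν = fun p => ((μr : ℝ) : ℂ) * diagVec ν p := by
      rw [hM, hΦ, amp_flip_mulVec]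
      funext p
      congr 1
      have hνC : (ν : ℂ) ≠ 0 := by
        exact_mod_cast (show (ν:ℝ) ≠ 0 from hν0.ne')
      have hνC1 : (ν : ℂ) + 1 ≠ 0 := by
        have : ((ν:ℝ) + 1 : ℝ) ≠ 0 := hν1.ne'
        exact_mod_cast this
      rw [hμr]
      push_cast
      field_simp
      ring
    -- lower bound on ‖M‖
    set S : ℝ := ∑ p : Fin ν × Fin ν, ‖diagVec ν p‖ ^ 2 with hS
    have hSpos : 0 < S := by
      rw [hS]
      have i0 : Fin ν := ⟨0, hν⟩
      have h1 : (1:ℝ) ≤ ∑ p : Fin ν × Fin ν, ‖diagVec ν p‖ ^ 2 := by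
        have := Finset.single_le_sum (f := fun p : Fin ν × Fin ν => ‖diagVec ν p‖ ^ 2)
          (fun _ _ => by positivity) (Finset.mem_univ (i0, i0))
        simpa [diagVec] using this
      linarith
    have hsqrtpos : 0 < Real.sqrt S := Real.sqrt_pos.mpr hSpos
    have hub := Matrix.l2_opNorm_mulVec M
      ((WithLp.equiv 2 (Fin ν × Fin ν → ℂ)).symm (diagVec ν))
    have h2 : (EuclideanSpace.equiv (Fin ν × Fin ν) ℂ).symm
        (M *ᵥ ((WithLp.equiv 2 (Fin ν × Fin ν → ℂ)).symm (diagVec ν)))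
        = (WithLp.equiv 2 (Fin ν × Fin ν → ℂ)).symm (M *ᵥ diagVec ν) := rfl
    rw [h2, hmu] at hub
    have hL : ‖(WithLp.equiv 2 (Fin ν × Fin ν → ℂ)).symm
        (fun p => ((μr : ℝ) : ℂ) * diagVec ν p)‖ = μr * Real.sqrt S := by
      rw [norm_wlp_symm]
      have hterm : ∀ p : Fin ν × Fin ν, ‖((μr : ℝ) : ℂ) * diagVec ν p‖ ^ 2
          = μr ^ 2 * ‖diagVec ν p‖ ^ 2 := by
        intro p
        rw [norm_mul, Complex.norm_real, Real.norm_eq_abs, abs_of_nonneg hμr0, mul_pow]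
      rw [Finset.sum_congr rfl fun p _ => hterm p, ← Finset.mul_sum, ← hS,
        Real.sqrt_mul (sq_nonneg μr), Real.sqrt_sq hμr0]
    have hR : ‖(WithLp.equiv 2 (Fin ν × Fin ν → ℂ)).symm (diagVec ν)‖ = Real.sqrt S := by
      rw [norm_wlp_symm, hS]
    rw [hL, hR] at hub
    have hMμ : μr ≤ ‖M‖ := le_of_mul_le_mul_right hub hsqrtpos
    have hMle : ‖M‖ ≤ opNorm (amp ν Φ) := by
      have h3 : ‖(LinearMap.toContinuousLinearMap (amp ν Φ)) (flipOp ν)‖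
          ≤ ‖LinearMap.toContinuousLinearMap (amp ν Φ)‖ * ‖flipOp ν‖ :=
        ContinuousLinearMap.le_opNorm _ _
      have h4 : (LinearMap.toContinuousLinearMap (amp ν Φ)) (flipOp ν) = M := rfl
      rw [h4] at h3
      calc ‖M‖ ≤ ‖LinearMap.toContinuousLinearMap (amp ν Φ)‖ * ‖flipOp ν‖ := h3
        _ ≤ ‖LinearMap.toContinuousLinearMap (amp ν Φ)‖ * 1 :=
            mul_le_mul_of_nonneg_left (flip_norm_le ν)
              (norm_nonneg (LinearMap.toContinuousLinearMap (amp ν Φ)))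
        _ = opNorm (amp ν Φ) := mul_one _
    have hfinal : ((ν : ℝ) - 1) / ((ν : ℝ) + 1) ≤ μr := by
      rw [hμr]
      have h1 : (0:ℝ) ≤ (ν:ℝ) - 1 := by
        have : (1:ℝ) ≤ (ν:ℝ) := by exact_mod_cast hν
        linarith
      exact div_le_div_of_nonneg_left h1 hν0 (by linarith)
    linarith

end QI
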